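/- There exists an MDP, a policy π, κ ∈ (0,1], a κ-greedy policy π_κ w.r.t. v^π, and α ∈ (0,κ) such that the mixture policy π(α,κ) = (1-α)π + απ_κ satisfies v^{π(α,κ)}(s) < v^π(s) for some state s (monotonic improvement fails for α < κ). -/

import Mathlib

/-- A finite MDP with `ns` states and `na` actions. -/
structure FinMDP (ns na : ℕ) where
  P : Fin ns → Fin na → Fin ns → ℝ
  r : Fin ns → Fin na → ℝ
  P_nonneg : ∀ s a s', 0 ≤ P s a s'
  P_sum : ∀ s a, ∑ s', P s a s' = 1

/-- A stochastic policy. -/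
def IsPolicy {ns na : ℕ} (π : Fin ns → Fin na → ℝ) : Prop :=
  (∀ s a, 0 ≤ π s a) ∧ ∀ s, ∑ a, π s a = 1

/-- Transition matrix induced by a policy. -/
def Pmat {ns na : ℕ} (M : FinMDP ns na) (π : Fin ns → Fin na → ℝ) :
    Matrix (Fin ns) (Fin ns) ℝ :=
  Matrix.of fun s s' => ∑ a, π s a * M.P s a s'

/-- Reward vector induced by a policy. -/
def rvec {ns na : ℕ} (M : FinMDP ns na) (π : Fin ns → Fin na → ℝ) : Fin ns → ℝ :=
  fun s => ∑ a, π s a * M.r s a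

/-- Value of a policy: `v^π = (I - γ P^π)⁻¹ r^π`. -/
noncomputable def value {ns na : ℕ} (M : FinMDP ns na) (γ : ℝ)
    (π : Fin ns → Fin na → ℝ) : Fin ns → ℝ :=
  (1 - γ • Pmat M π)⁻¹.mulVec (rvec M π)

/-- `T^π_κ v = (I - κγP^π)⁻¹ (r^π + (1-κ)γ P^π v)`. -/
noncomputable def Tkappa {ns na : ℕ} (M : FinMDP ns na) (γ κ : ℝ)
    (π : Fin ns → Fin na → ℝ) (v : Fin ns → ℝ) : Fin ns → ℝ :=
  (1 - (κ*γ) • Pmat M π)⁻¹.mulVec (rvec M π + ((1-κ)*γ) • (Pmat M π).mulVec v)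


namespace TightRope

def Mp : Fin 4 → Fin 2 → Fin 4 → ℝ :=
  ![![![1,0,0,0], ![0,1,0,0]],
    ![![0,0,0,1], ![0,0,1,0]],
    ![![0,0,1,0], ![0,0,1,0]],
    ![![0,0,0,1], ![0,0,0,1]]]

def Mr : Fin 4 → Fin 2 → ℝ :=
  ![![0,0], ![0,0], ![1,1], ![-2,-2]]

def M : FinMDP 4 2 where
  P := Mp
  r := Mr
  P_nonneg := by
    intro s a s'
    fin_cases s <;> fin_cases a <;> fin_cases s' <;> norm_num [Mp]
  P_sum := by
    intro s a
    fin_cases s <;> fin_cases a <;> norm_num [Mp, Fin.sum_univ_four, Matrix.cons_val_two, Matrix.cons_val_three]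

noncomputable def B (p q : ℝ) : Matrix (Fin 4) (Fin 4) ℝ :=
  !![2/(1+q), q/(1+q), q*p/(1+q), q*(1-p)/(1+q);
     0, 1, p, 1-p;
     0, 0, 2, 0;
     0, 0, 0, 2]

lemma value_eq (π' : Fin 4 → Fin 2 → ℝ) (h : IsPolicy π') :
    value M (1/2) π' =
      ![π' 0 1 * (3 * π' 1 1 - 2) / (1 + π' 0 1), 3 * π' 1 1 - 2, 2, -4] := by
  obtain ⟨hnn, hsum⟩ := h
  have hq0 : 0 ≤ π' 0 1 := hnn 0 1
  have h00 : π' 0 0 = 1 - π' 0 1 := by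
    have := hsum 0; simp [Fin.sum_univ_two] at this; linarith
  have h10 : π' 1 0 = 1 - π' 1 1 := by
    have := hsum 1; simp [Fin.sum_univ_two] at this; linarith
  have h2 : π' 2 0 = 1 - π' 2 1 := by
    have := hsum 2; simp [Fin.sum_univ_two] at this; linarith
  have h3 : π' 3 0 = 1 - π' 3 1 := by
    have := hsum 3; simp [Fin.sum_univ_two] at this; linarith
  have hq : (1:ℝ) + π' 0 1 ≠ 0 := by positivity
  have hB : (1 - (1/2:ℝ) • Pmat M π') * B (π' 1 1) (π' 0 1) = 1 := by
    ext i j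
    fin_cases i <;> fin_cases j <;>
      (simp [Matrix.mul_apply, Pmat, Fin.sum_univ_four, Fin.sum_univ_two,
        Matrix.one_apply, B, M, Mp, Matrix.vecHead, Matrix.vecTail, h00, h10, h2, h3]
       <;> (try field_simp) <;> ring_nf)
  have hinv : (1 - (1/2:ℝ) • Pmat M π')⁻¹ = B (π' 1 1) (π' 0 1) :=
    Matrix.inv_eq_right_inv hB
  unfold value
  rw [hinv]
  funext s
  fin_cases s <;>
    (simp [Matrix.mulVec, dotProduct, rvec, B, M, Mr, Matrix.vecHead,
      Matrix.vecTail, Fin.sum_univ_four, Fin.sum_univ_two, h2, h3]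
     <;> (try field_simp) <;> ring_nf)

lemma Tk1 (π' : Fin 4 → Fin 2 → ℝ) (v : Fin 4 → ℝ) :
    Tkappa M (1/2) 1 π' v = value M (1/2) π' := by
  unfold Tkappa value
  norm_num

end TightRope

/-- There exist an MDP, a policy `π`, `κ ∈ (0,1]`, a κ-greedy policy `π_κ` w.r.t. `v^π`, and a
stepsize `α ∈ (0,κ)` such that the mixture `π(α,κ) = (1-α)π + απ_κ` is strictly worse than `π`
at some state: monotonic improvement fails for `α < κ`. -/
theorem stmt5 :
    ∃ (ns na : ℕ) (M : FinMDP ns na) (γ κ α : ℝ) (π πκ : Fin ns → Fin na → ℝ),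
      γ ∈ Set.Ioo (0:ℝ) 1 ∧ κ ∈ Set.Ioc (0:ℝ) 1 ∧ α ∈ Set.Ioo 0 κ ∧
      IsPolicy π ∧ IsPolicy πκ ∧
      (∀ π' : Fin ns → Fin na → ℝ, IsPolicy π' →
        Tkappa M γ κ π' (value M γ π) ≤ Tkappa M γ κ πκ (value M γ π)) ∧
      ∃ s : Fin ns,
        value M γ (fun s a => (1-α) * π s a + α * πκ s a) s < value M γ π s := by
  classical
  refine ⟨4, 2, TightRope.M, 1/2, 1, 1/2,
    (fun _ a => if a = 0 then 1 else 0), (fun _ a => if a = 1 then 1 else 0),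
    by norm_num, by norm_num, by norm_num, ?_, ?_, ?_, ?_⟩
  · exact ⟨fun s a => by fin_cases a <;> norm_num, fun s => by simp [Fin.sum_univ_two]⟩
  · exact ⟨fun s a => by fin_cases a <;> norm_num, fun s => by simp [Fin.sum_univ_two]⟩
  · intro π' hπ'
    rw [TightRope.Tk1, TightRope.Tk1, TightRope.value_eq π' hπ',
      TightRope.value_eq _ ⟨fun s a => by fin_cases a <;> norm_num,
        fun s => by simp [Fin.sum_univ_two]⟩]
    obtain ⟨hnn, hsum⟩ := hπ'
    have hq0 : 0 ≤ π' 0 1 := hnn 0 1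
    have hq1 : π' 0 1 ≤ 1 := by
      have := hsum 0; have := hnn 0 0; simp [Fin.sum_univ_two] at *; linarith
    have hp0 : 0 ≤ π' 1 1 := hnn 1 1
    have hp1 : π' 1 1 ≤ 1 := by
      have := hsum 1; have := hnn 1 0; simp [Fin.sum_univ_two] at *; linarith
    intro s
    fin_cases s <;> simp <;> try linarith
    · rw [div_le_iff₀ (by linarith : (0:ℝ) < 1 + π' 0 1)]
      nlinarith [mul_nonneg hq0 (by linarith : (0:ℝ) ≤ 1 - π' 1 1)]
  · refine ⟨0, ?_⟩
    rw [TightRope.value_eq _ ⟨fun s a => by fin_cases a <;> norm_num,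
        fun s => by simp [Fin.sum_univ_two]⟩,
      TightRope.value_eq _ ⟨fun s a => by fin_cases a <;> norm_num,
        fun s => by simp [Fin.sum_univ_two]⟩]
    norm_num
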